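/- Let N be a standard normal random variable and let x ∈ ℝ be fixed. Then as p → ∞, p · P(N² > 2·log p - log(log p) + x) → (1/√π)·exp(-x/2). -/

import Mathlib

open Real Filter MeasureTheory ProbabilityTheory Topology

namespace Stmt1Aux

/-- Gaussian tail integral (unnormalized). -/
noncomputable def G (t : ℝ) : ℝ := ∫ y in Set.Ioi t, Real.exp (-y ^ 2 / 2)

lemma intOn (t : ℝ) : IntegrableOn (fun y : ℝ => rexp (-y ^ 2 / 2)) (Set.Ioi t) := by
  have h : Integrable (fun y : ℝ => rexp (-(1/2) * y ^ 2)) :=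
    integrable_exp_neg_mul_sq (by norm_num)
  have h2 : (fun y : ℝ => rexp (-(1/2) * y ^ 2)) = fun y : ℝ => rexp (-y ^ 2 / 2) := by
    ext y; congr 1; ring
  rw [h2] at h
  exact h.integrableOn

lemma intOn_mul (t : ℝ) :
    IntegrableOn (fun y : ℝ => y * rexp (-y ^ 2 / 2)) (Set.Ioi t) := by
  have h := integrable_rpow_mul_exp_neg_mul_sq (b := 1/2) (by norm_num) (s := 1) (by norm_num)
  have h2 : (fun y : ℝ => y ^ (1:ℝ) * rexp (-(1/2) * y ^ 2))
      = fun y : ℝ => y * rexp (-y ^ 2 / 2) := by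
    ext y; rw [Real.rpow_one]; congr 1; ring
  rw [h2] at h
  exact h.integrableOn

lemma hasDeriv_exp (y : ℝ) :
    HasDerivAt (fun z : ℝ => rexp (-z ^ 2 / 2)) (-y * rexp (-y ^ 2 / 2)) y := by
  have h1 : HasDerivAt (fun z : ℝ => -z ^ 2 / 2) (-y) y := by
    have := ((hasDerivAt_pow 2 y).neg).div_const 2
    refine this.congr_deriv ?_
    simp; ring
  have := h1.exp
  convert this using 1
  ring

lemma tendsto_exp_zero : Tendsto (fun z : ℝ => rexp (-z ^ 2 / 2)) atTop (𝓝 0) := by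
  have h1 : Tendsto (fun z : ℝ => -z ^ 2 / 2) atTop atBot := by
    apply Tendsto.atBot_div_const (by norm_num : (0:ℝ) < 2)
    exact tendsto_neg_atBot_iff.mpr (tendsto_pow_atTop (by norm_num))
  exact Real.tendsto_exp_atBot.comp h1

lemma integral_mul (t : ℝ) :
    ∫ y in Set.Ioi t, y * rexp (-y ^ 2 / 2) = rexp (-t ^ 2 / 2) := by
  have hderiv : ∀ y ∈ Set.Ici t,
      HasDerivAt (fun z : ℝ => -rexp (-z ^ 2 / 2)) (y * rexp (-y ^ 2 / 2)) y := by
    intro y _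
    have := (hasDeriv_exp y).neg
    exact this.congr_deriv (by ring)
  have htend : Tendsto (fun z : ℝ => -rexp (-z ^ 2 / 2)) atTop (𝓝 0) := by
    have := tendsto_exp_zero.neg
    simpa using this
  rw [integral_Ioi_of_hasDerivAt_of_tendsto' hderiv (intOn_mul t) htend]
  ring

lemma intOn_aux {t : ℝ} (ht : 0 < t) :
    IntegrableOn (fun y : ℝ => (1 + (y⁻¹) ^ 2) * rexp (-y ^ 2 / 2)) (Set.Ioi t) := by
  refine Integrable.mono' ((intOn t).const_mul (1 + (t⁻¹) ^ 2)) ?_ ?_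
  · exact (Measurable.aestronglyMeasurable (by measurability))
  · filter_upwards [ae_restrict_mem measurableSet_Ioi] with y hy
    have hy' : t < y := hy
    have hy0 : 0 < y := ht.trans hy'
    have h1 : y⁻¹ ≤ t⁻¹ := by
      apply inv_anti₀ ht hy'.le
    have h0 : 0 ≤ y⁻¹ := by positivity
    have h2 : (y⁻¹) ^ 2 ≤ (t⁻¹) ^ 2 := by nlinarith
    have he : 0 < rexp (-y ^ 2 / 2) := Real.exp_pos _
    rw [Real.norm_eq_abs, abs_of_nonneg (by positivity)]
    nlinarith [mul_le_mul_of_nonneg_right h2 he.le]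

lemma integral_one_add {t : ℝ} (ht : 0 < t) :
    ∫ y in Set.Ioi t, (1 + (y⁻¹) ^ 2) * rexp (-y ^ 2 / 2) = rexp (-t ^ 2 / 2) / t := by
  have hderiv : ∀ y ∈ Set.Ici t,
      HasDerivAt (fun z : ℝ => -(z⁻¹ * rexp (-z ^ 2 / 2)))
        ((1 + (y⁻¹) ^ 2) * rexp (-y ^ 2 / 2)) y := by
    intro y hy
    have hy0 : y ≠ 0 := by have := lt_of_lt_of_le ht hy; positivity
    have h1 : HasDerivAt (fun z : ℝ => z⁻¹) (-(y ^ 2)⁻¹) y := hasDerivAt_inv hy0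
    have := (h1.mul (hasDeriv_exp y)).neg
    refine this.congr_deriv ?_
    have hy2 : (y ^ 2) ≠ 0 := pow_ne_zero 2 hy0
    field_simp
    ring
  have htend : Tendsto (fun z : ℝ => -(z⁻¹ * rexp (-z ^ 2 / 2))) atTop (𝓝 0) := by
    have := (tendsto_inv_atTop_zero.mul tendsto_exp_zero).neg
    simpa using this
  rw [integral_Ioi_of_hasDerivAt_of_tendsto' hderiv (intOn_aux ht) htend]
  field_simp
  ring

lemma G_upper {t : ℝ} (ht : 0 < t) : G t ≤ rexp (-t ^ 2 / 2) / t := by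
  have hmono : G t ≤ ∫ y in Set.Ioi t, t⁻¹ * (y * rexp (-y ^ 2 / 2)) := by
    refine setIntegral_mono_on (intOn t) ((intOn_mul t).const_mul t⁻¹)
      measurableSet_Ioi ?_
    intro y hy
    have hy' : t < y := hy
    have he : 0 < rexp (-y ^ 2 / 2) := Real.exp_pos _
    have h1 : 1 ≤ t⁻¹ * y := by
      have hinv : 0 < t⁻¹ := inv_pos.mpr ht
      have hc : t⁻¹ * t = 1 := inv_mul_cancel₀ ht.ne'
      nlinarith
    nlinarith
  rw [MeasureTheory.integral_const_mul, integral_mul] at hmono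
  rw [div_eq_inv_mul]
  exact hmono

lemma G_lower {t : ℝ} (ht : 0 < t) : rexp (-t ^ 2 / 2) * t / (t ^ 2 + 1) ≤ G t := by
  have hmono : ∫ y in Set.Ioi t, (1 + (y⁻¹) ^ 2) * rexp (-y ^ 2 / 2)
      ≤ ∫ y in Set.Ioi t, (1 + (t⁻¹) ^ 2) * rexp (-y ^ 2 / 2) := by
    refine setIntegral_mono_on (intOn_aux ht) ((intOn t).const_mul _)
      measurableSet_Ioi ?_
    intro y hy
    have hy' : t < y := hy
    have hy0 : 0 < y := ht.trans hy'
    have h1 : y⁻¹ ≤ t⁻¹ := inv_anti₀ ht hy'.le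
    have h0 : 0 ≤ y⁻¹ := by positivity
    have h2 : (y⁻¹) ^ 2 ≤ (t⁻¹) ^ 2 := by nlinarith
    have he : 0 < rexp (-y ^ 2 / 2) := Real.exp_pos _
    nlinarith [mul_le_mul_of_nonneg_right h2 he.le]
  rw [integral_one_add ht, MeasureTheory.integral_const_mul] at hmono
  have hG : G t = ∫ y in Set.Ioi t, rexp (-y ^ 2 / 2) := rfl
  rw [← hG] at hmono
  have hc : 0 < 1 + (t⁻¹) ^ 2 := by positivity
  have heq : rexp (-t ^ 2 / 2) * t / (t ^ 2 + 1)
      = (rexp (-t ^ 2 / 2) / t) / (1 + (t⁻¹) ^ 2) := by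
    field_simp
  rw [heq, div_le_iff₀ hc]
  nlinarith

lemma G_nonneg (t : ℝ) : 0 ≤ G t :=
  MeasureTheory.setIntegral_nonneg measurableSet_Ioi (fun y _ => (Real.exp_pos _).le)

lemma measure_eq {u : ℝ} (hu : 0 < u) :
    ((gaussianReal 0 1) {y : ℝ | y ^ 2 > u}).toReal
      = (Real.sqrt (2 * π))⁻¹ * (2 * G (Real.sqrt u)) := by
  have hpdf : gaussianPDFReal 0 1 = fun y : ℝ => (Real.sqrt (2 * π))⁻¹ * rexp (-y ^ 2 / 2) := by
    ext y
    simp [gaussianPDFReal]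
  have hsqrtu : (Real.sqrt u) ^ 2 = u := Real.sq_sqrt hu.le
  have hset : {y : ℝ | y ^ 2 > u} = Set.Iio (-Real.sqrt u) ∪ Set.Ioi (Real.sqrt u) := by
    ext y
    simp only [Set.mem_setOf_eq, Set.mem_union, Set.mem_Iio, Set.mem_Ioi, gt_iff_lt]
    constructor
    · intro h
      rcases le_or_gt y 0 with hy | hy
      · left
        have hy0 : 0 < -y := by
          rcases eq_or_lt_of_le hy with rfl | h'
          · exfalso; simp at h; linarith
          · linarith
        have : Real.sqrt u < -y := (Real.sqrt_lt' hy0).mpr (by nlinarith)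
        linarith
      · right
        exact (Real.sqrt_lt' hy).mpr h
    · intro h
      have h0 : 0 ≤ Real.sqrt u := Real.sqrt_nonneg u
      rcases h with h | h
      · nlinarith
      · nlinarith
  rw [gaussianReal_apply_eq_integral 0 one_ne_zero, hset]
  rw [ENNReal.toReal_ofReal (MeasureTheory.setIntegral_nonneg
    ((measurableSet_Iio).union measurableSet_Ioi)
    (fun y _ => gaussianPDFReal_nonneg 0 1 y))]
  have hdisj : Disjoint (Set.Iio (-Real.sqrt u)) (Set.Ioi (Real.sqrt u)) := by
    rw [Set.disjoint_left]
    intro y h1 h2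
    simp only [Set.mem_Iio] at h1
    simp only [Set.mem_Ioi] at h2
    have h0 : 0 ≤ Real.sqrt u := Real.sqrt_nonneg u
    linarith
  rw [MeasureTheory.setIntegral_union hdisj measurableSet_Ioi
    ((integrable_gaussianPDFReal 0 1).integrableOn)
    ((integrable_gaussianPDFReal 0 1).integrableOn)]
  have hsym : ∫ y in Set.Iio (-Real.sqrt u), gaussianPDFReal 0 1 y
      = ∫ y in Set.Ioi (Real.sqrt u), gaussianPDFReal 0 1 y := by
    rw [← MeasureTheory.integral_Iic_eq_integral_Iio,
      ← integral_comp_neg_Ioi]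
    refine MeasureTheory.setIntegral_congr_fun measurableSet_Ioi fun y _ => ?_
    rw [hpdf]
    simp
  rw [hsym, hpdf]
  rw [MeasureTheory.integral_const_mul]
  have hG : (∫ y in Set.Ioi (Real.sqrt u), rexp (-y ^ 2 / 2)) = G (Real.sqrt u) := rfl
  rw [hG]
  ring


lemma alg1 (P E e l a s U : ℝ) (ha : 0 < a) (hs : 0 < s) (hU : 0 < U)
    (hpe : P * E = l * e) (h5 : a * a = U) :
    2 / s * e * (l / a) * (U / (U + 1)) = P * (s⁻¹ * (2 * (E * a / (U + 1)))) := by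
  subst h5
  have h1 : a * a + 1 ≠ 0 := by positivity
  field_simp
  linear_combination hpe.symm

lemma alg2 (P E e l a s : ℝ) (ha : 0 < a) (hs : 0 < s)
    (hpe : P * E = l * e) :
    P * (s⁻¹ * (2 * (E / a))) = 2 / s * e * (l / a) := by
  field_simp
  linear_combination hpe

end Stmt1Aux

open Stmt1Aux

/-- For `N` standard normal and fixed `x ∈ ℝ`, as `p → ∞`,
`p · P(N² > 2 log p - log log p + x) → (1/√π)·exp(-x/2)`. -/
theorem stmt1 (x : ℝ) :
    Tendsto
      (fun p : ℕ =>
        (p : ℝ) *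
          ((gaussianReal 0 1)
            {y : ℝ | y ^ 2 > 2 * Real.log p - Real.log (Real.log p) + x}).toReal)
      atTop (nhds ((1 / Real.sqrt π) * Real.exp (-x / 2))) := by
  set u : ℕ → ℝ := fun p => 2 * Real.log p - Real.log (Real.log p) + x with hu_def
  set C : ℝ := 2 / Real.sqrt (2 * π) * rexp (-x / 2) with hC_def
  have hπ : 0 < Real.sqrt (2 * π) := Real.sqrt_pos.mpr (by positivity)
  -- basic limits
  have h1 : Tendsto (fun p : ℕ => Real.log p) atTop atTop :=
    Real.tendsto_log_atTop.comp tendsto_natCast_atTop_atTop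
  have hu : Tendsto u atTop atTop := by
    apply tendsto_atTop_mono' _ _ (tendsto_atTop_add_const_right _ x h1)
    filter_upwards [h1.eventually_ge_atTop 1] with p hp
    have : Real.log (Real.log p) ≤ Real.log p :=
      Real.log_le_self (by linarith)
    simp only [hu_def]
    linarith
  have hlog : Tendsto (fun p : ℕ => Real.log (Real.log p) / Real.log p) atTop (𝓝 0) :=
    Real.isLittleO_log_id_atTop.tendsto_div_nhds_zero.comp h1
  have hratio : Tendsto (fun p : ℕ => u p / Real.log p) atTop (𝓝 2) := by
    have h2 : Tendsto (fun p : ℕ => 2 - Real.log (Real.log p) / Real.log p + x / Real.log p)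
        atTop (𝓝 (2 - 0 + 0)) :=
      (tendsto_const_nhds.sub hlog).add (tendsto_const_nhds.div_atTop h1)
    rw [show (2:ℝ) - 0 + 0 = 2 by ring] at h2
    apply h2.congr'
    filter_upwards [h1.eventually_gt_atTop 0] with p hp
    have hne : Real.log p ≠ 0 := ne_of_gt hp
    simp only [hu_def]
    field_simp
  have hinv : Tendsto (fun p : ℕ => Real.log p / u p) atTop (𝓝 (1/2)) := by
    have h2 := hratio.inv₀ (by norm_num : (2:ℝ) ≠ 0)
    rw [show ((2:ℝ))⁻¹ = 1/2 by norm_num] at h2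
    apply h2.congr'
    filter_upwards [h1.eventually_gt_atTop 0, hu.eventually_gt_atTop 0] with p hp hup
    rw [inv_div]
  -- upper bound function
  have hU : Tendsto (fun p : ℕ => C * Real.sqrt (Real.log p / u p)) atTop
      (𝓝 ((1 / Real.sqrt π) * rexp (-x / 2))) := by
    have h2 : Tendsto (fun p : ℕ => Real.sqrt (Real.log p / u p)) atTop
        (𝓝 (Real.sqrt (1/2))) :=
      (Real.continuous_sqrt.tendsto _).comp hinv
    have key : C * Real.sqrt (1/2) = 1 / Real.sqrt π * rexp (-x / 2) := by
      have hs2 : Real.sqrt 2 * Real.sqrt 2 = 2 := Real.mul_self_sqrt (by norm_num)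
      have hsπ : 0 < Real.sqrt π := Real.sqrt_pos.mpr Real.pi_pos
      have hmul : Real.sqrt (2 * π) = Real.sqrt 2 * Real.sqrt π :=
        Real.sqrt_mul (by norm_num) π
      have hhalf : Real.sqrt (1/2) = 1 / Real.sqrt 2 := by
        rw [Real.sqrt_div' 1 (by norm_num)]
        simp
      have h2pos : (0:ℝ) < Real.sqrt 2 := Real.sqrt_pos.mpr (by norm_num)
      rw [hC_def, hmul, hhalf]
      field_simp
      linear_combination (-1) * hs2
    rw [← key]
    exact h2.const_mul C
  -- lower bound function
  have hfrac : Tendsto (fun p : ℕ => u p / (u p + 1)) atTop (𝓝 1) := by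
    have base : Tendsto (fun t : ℝ => t / (t + 1)) atTop (𝓝 1) := by
      have h2 : Tendsto (fun t : ℝ => 1 - 1 / (t + 1)) atTop (𝓝 (1 - 0)) :=
        tendsto_const_nhds.sub (tendsto_const_nhds.div_atTop
          (tendsto_atTop_add_const_right _ 1 tendsto_id))
      rw [sub_zero] at h2
      apply h2.congr'
      filter_upwards [eventually_gt_atTop 0] with t ht
      have : t + 1 ≠ 0 := by linarith
      field_simp
      ring
    exact base.comp hu
  have hL : Tendsto (fun p : ℕ => C * Real.sqrt (Real.log p / u p) * (u p / (u p + 1)))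
      atTop (𝓝 ((1 / Real.sqrt π) * rexp (-x / 2))) := by
    have := hU.mul hfrac
    simpa using this
  -- squeeze
  refine tendsto_of_tendsto_of_tendsto_of_le_of_le' hL hU ?_ ?_
  · -- lower bound eventually
    filter_upwards [h1.eventually_gt_atTop 1, hu.eventually_gt_atTop 1,
      eventually_gt_atTop 0] with p hlogp hup hp
    have hup0 : 0 < u p := by linarith
    have hsu : 0 < Real.sqrt (u p) := Real.sqrt_pos.mpr hup0
    have hsq : (Real.sqrt (u p)) ^ 2 = u p := Real.sq_sqrt hup0.le
    have hpe : (p : ℝ) * rexp (-(u p) / 2) = Real.sqrt (Real.log p) * rexp (-x / 2) := by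
      have hp0 : (0:ℝ) < p := by exact_mod_cast hp
      have hlp : (0:ℝ) < Real.log p := by linarith
      have hexp : rexp (-(u p) / 2)
          = rexp (-Real.log p) * rexp (Real.log (Real.log p) / 2) * rexp (-x / 2) := by
        rw [← Real.exp_add, ← Real.exp_add]
        congr 1
        simp only [hu_def]
        ring
      have h3 : rexp (-Real.log p) = (p : ℝ)⁻¹ := by
        rw [Real.exp_neg, Real.exp_log hp0]
      have h4 : rexp (Real.log (Real.log p) / 2) = Real.sqrt (Real.log p) := by
        rw [← Real.log_sqrt hlp.le]
        exact Real.exp_log (Real.sqrt_pos.mpr hlp)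
      rw [hexp, h3, h4]
      field_simp
    rw [show {y : ℝ | y ^ 2 > 2 * Real.log p - Real.log (Real.log p) + x}
      = {y : ℝ | y ^ 2 > u p} from rfl, measure_eq hup0]
    have hGlow := G_lower hsu
    rw [hsq] at hGlow
    calc C * Real.sqrt (Real.log p / u p) * (u p / (u p + 1))
        = (p : ℝ) * ((Real.sqrt (2 * π))⁻¹
          * (2 * (rexp (-(u p) / 2) * Real.sqrt (u p) / (u p + 1)))) := by
          have hlp : (0:ℝ) ≤ Real.log p := by linarith
          rw [Real.sqrt_div hlp, hC_def]
          exact alg1 _ _ _ _ _ _ _ hsu hπ hup0 hpe (Real.mul_self_sqrt hup0.le)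
      _ ≤ (p : ℝ) * ((Real.sqrt (2 * π))⁻¹ * (2 * G (Real.sqrt (u p)))) := by
          have hp0 : (0:ℝ) ≤ p := by positivity
          have hb : rexp (-(u p) / 2) * Real.sqrt (u p) / (u p + 1) ≤ G (Real.sqrt (u p)) := by
            convert hGlow using 2
          gcongr
  · -- upper bound eventually
    filter_upwards [h1.eventually_gt_atTop 1, hu.eventually_gt_atTop 1,
      eventually_gt_atTop 0] with p hlogp hup hp
    have hup0 : 0 < u p := by linarith
    have hsu : 0 < Real.sqrt (u p) := Real.sqrt_pos.mpr hup0
    have hsq : (Real.sqrt (u p)) ^ 2 = u p := Real.sq_sqrt hup0.le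
    have hpe : (p : ℝ) * rexp (-(u p) / 2) = Real.sqrt (Real.log p) * rexp (-x / 2) := by
      have hp0 : (0:ℝ) < p := by exact_mod_cast hp
      have hlp : (0:ℝ) < Real.log p := by linarith
      have hexp : rexp (-(u p) / 2)
          = rexp (-Real.log p) * rexp (Real.log (Real.log p) / 2) * rexp (-x / 2) := by
        rw [← Real.exp_add, ← Real.exp_add]
        congr 1
        simp only [hu_def]
        ring
      have h3 : rexp (-Real.log p) = (p : ℝ)⁻¹ := by
        rw [Real.exp_neg, Real.exp_log hp0]
      have h4 : rexp (Real.log (Real.log p) / 2) = Real.sqrt (Real.log p) := by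
        rw [← Real.log_sqrt hlp.le]
        exact Real.exp_log (Real.sqrt_pos.mpr hlp)
      rw [hexp, h3, h4]
      field_simp
    rw [show {y : ℝ | y ^ 2 > 2 * Real.log p - Real.log (Real.log p) + x}
      = {y : ℝ | y ^ 2 > u p} from rfl, measure_eq hup0]
    have hGup := G_upper hsu
    rw [hsq] at hGup
    calc (p : ℝ) * ((Real.sqrt (2 * π))⁻¹ * (2 * G (Real.sqrt (u p))))
        ≤ (p : ℝ) * ((Real.sqrt (2 * π))⁻¹
          * (2 * (rexp (-(u p) / 2) / Real.sqrt (u p)))) := by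
          have hp0 : (0:ℝ) ≤ p := by positivity
          gcongr
      _ = C * Real.sqrt (Real.log p / u p) := by
          have hlp : (0:ℝ) ≤ Real.log p := by linarith
          rw [Real.sqrt_div hlp, hC_def]
          exact alg2 _ _ _ _ _ _ hsu hπ hpe
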